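/- Let V be a Hilbert space, F ∈ V' a continuous antilinear functional, U a Hilbert space, B : U → V' a bounded linear operator, and T : U → V the operator with ⟨Tw, v⟩_V = (Bw)(v) for all v ∈ V. For a finite-dimensional subspace U_h ⊆ U with V_h = T U_h, an element u_h ∈ U_h satisfies (B u_h)(v) = F(v) for all v ∈ V_h if and only if u_h minimizes ‖B w_h − F‖_{V'} over all w_h ∈ U_h. -/

import Mathlib

open scoped InnerProductSpace

/-- If an antilinear functional is represented by `x`, its norm is `‖x‖`. -/
lemma norm_rep {V : Type*} [NormedAddCommGroup V] [InnerProductSpace ℂ V]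
    (G : V →L⋆[ℂ] ℂ) (x : V) (hx : ∀ v, G v = ⟪v, x⟫_ℂ) : ‖G‖ = ‖x‖ := by
  refine le_antisymm (G.opNorm_le_bound (norm_nonneg x) fun v => ?_) ?_
  · rw [hx]
    rw [mul_comm]; exact norm_inner_le_norm (𝕜 := ℂ) v x
  · rcases eq_or_ne x 0 with rfl | hx0
    · simp
    · have h := G.le_opNorm x
      rw [hx, inner_self_eq_norm_sq_to_K] at h
      have : ‖x‖ * ‖x‖ ≤ ‖G‖ * ‖x‖ := by
        calc ‖x‖ * ‖x‖ = ‖(‖x‖ : ℂ) ^ 2‖ := by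
              simp [pow_two, abs_of_nonneg, norm_nonneg]
          _ ≤ ‖G‖ * ‖x‖ := h
      exact le_of_mul_le_mul_right this (norm_pos_iff.mpr hx0)

/-- Conjugate of an antilinear continuous functional, as a linear functional. -/
noncomputable def conjComp {V : Type*} [NormedAddCommGroup V] [InnerProductSpace ℂ V]
    (G : V →L⋆[ℂ] ℂ) : V →L[ℂ] ℂ :=
  LinearMap.mkContinuous
    { toFun := fun v => (starRingEnd ℂ) (G v)
      map_add' := by intro a b; simp
      map_smul' := by intro c a; simp }
    ‖G‖ (fun v => by simpa using G.le_opNorm v)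

/-- The DPG method with optimal test functions is equivalent to residual
minimization in the dual norm: `u_h` solves the discrete variational problem on
`V_h = T(U_h)` iff it minimizes `‖B w_h − F‖_{V'}` over `U_h`. -/
theorem stmt_6 {U V : Type*} [NormedAddCommGroup U] [InnerProductSpace ℂ U]
    [NormedAddCommGroup V] [InnerProductSpace ℂ V] [CompleteSpace V]
    (F : V →L⋆[ℂ] ℂ) (B : U →L[ℂ] (V →L⋆[ℂ] ℂ))
    (T : U → V) (hT : ∀ (w : U) (v : V), ⟪v, T w⟫_ℂ = B w v)
    (Uh : Submodule ℂ U) (hfin : FiniteDimensional ℂ Uh)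
    (uh : U) (huh : uh ∈ Uh) :
    (∀ wh ∈ Uh, B uh (T wh) = F (T wh)) ↔
      (∀ wh ∈ Uh, ‖B uh - F‖ ≤ ‖B wh - F‖) := by
  -- T is linear
  have Tadd : ∀ a b : U, T (a + b) = T a + T b := by
    intro a b
    apply ext_inner_left ℂ
    intro v
    rw [hT, inner_add_right, hT, hT, map_add]
    rfl
  have Tsmul : ∀ (c : ℂ) (a : U), T (c • a) = c • T a := by
    intro c a
    apply ext_inner_left ℂ
    intro v
    rw [hT, inner_smul_right, hT, map_smul]
    rfl
  let Tl : U →ₗ[ℂ] V := { toFun := T, map_add' := Tadd, map_smul' := Tsmul }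
  let K : Submodule ℂ V := Uh.map Tl
  -- Riesz representative of F
  set f : V := (InnerProductSpace.toDual ℂ V).symm (conjComp F) with hf
  have hFf : ∀ v, F v = ⟪v, f⟫_ℂ := by
    intro v
    have : (InnerProductSpace.toDual ℂ V) f v = conjComp F v := by
      rw [hf, LinearIsometryEquiv.apply_symm_apply]
    rw [InnerProductSpace.toDual_apply_apply] at this
    have h2 : conjComp F v = (starRingEnd ℂ) (F v) := rfl
    rw [h2] at this
    have := congrArg (starRingEnd ℂ) this
    simpa [inner_conj_symm] using this.symm
  -- norm identity
  have hnorm : ∀ w : U, ‖B w - F‖ = ‖T w - f‖ := by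
    intro w
    apply norm_rep
    intro v
    simp only [ContinuousLinearMap.sub_apply, inner_sub_right, ← hT, hFf]
  -- rewrite both sides
  have hTuhK : T uh ∈ K := ⟨uh, huh, rfl⟩
  rw [show (∀ wh ∈ Uh, ‖B uh - F‖ ≤ ‖B wh - F‖) ↔
      ∀ w ∈ K, ‖f - T uh‖ ≤ ‖f - w‖ by
    constructor
    · rintro h w ⟨wh, hwh, rfl⟩
      have := h wh hwh
      rw [hnorm, hnorm, norm_sub_rev, norm_sub_rev (T wh)] at this
      exact this
    · intro h wh hwh
      rw [hnorm, hnorm, norm_sub_rev, norm_sub_rev (T wh)]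
      exact h (Tl wh) ⟨wh, hwh, rfl⟩]
  have hmin : (∀ w ∈ K, ‖f - T uh‖ ≤ ‖f - w‖) ↔
      (‖f - T uh‖ = ⨅ w : K, ‖f - w‖) := by
    constructor
    · intro h
      refine le_antisymm (le_ciInf fun w => h w w.2) ?_
      exact ciInf_le ⟨0, fun x ⟨w, hw⟩ => hw ▸ norm_nonneg _⟩ (⟨T uh, hTuhK⟩ : K)
    · intro h w hw
      rw [h]
      exact ciInf_le ⟨0, fun x ⟨y, hy⟩ => hy ▸ norm_nonneg _⟩ (⟨w, hw⟩ : K)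
  rw [hmin, K.norm_eq_iInf_iff_inner_eq_zero hTuhK]
  constructor
  · intro h w hw
    rcases hw with ⟨wh, hwh, rfl⟩
    have := h wh hwh
    rw [← hT, hFf] at this
    rw [inner_sub_left, sub_eq_zero]
    have := congrArg (starRingEnd ℂ) this
    simpa [inner_conj_symm, Tl] using this.symm
  · intro h wh hwh
    have := h (Tl wh) ⟨wh, hwh, rfl⟩
    rw [inner_sub_left, sub_eq_zero] at this
    rw [← hT, hFf]
    have := congrArg (starRingEnd ℂ) this
    simpa [inner_conj_symm, Tl] using this.symm
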